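/- arXiv:2407.02412 — 2 statements merged into one kernel-verified Lean document; each statement's English description precedes it below -/
import Mathlib

section
/- Fix an even integer k = 2q ≥ 6 and let J_k be the even interior gadget. Then there exists a k-leaf root T of J_k such that m_T(t) = k and m_T(b) = 3. -/
open SimpleGraph

/-- A vertex of a graph is a leaf if it has exactly one neighbor. -/
def IsLeafVert {W : Type} (T : SimpleGraph W) (w : W) : Prop := ∃! u, T.Adj w u

/-- `T` (a finite tree on vertex type `W`) together with the injection `f` of the
vertices of `G` onto the leaves of `T` is a `k`-leaf root of `G`:  the leaves of `T`
are exactly the image of `f`, and two distinct vertices of `G` are adjacent iff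
their distance in `T` is at most `k`. -/
def IsLeafRoot {V W : Type} (G : SimpleGraph V) (k : ℕ)
    (T : SimpleGraph W) (f : V → W) : Prop :=
  Finite W ∧ T.IsTree ∧ Function.Injective f ∧
    (∀ w : W, (∃ v, f v = w) ↔ IsLeafVert T w) ∧
    (∀ u v : V, u ≠ v → (G.Adj u v ↔ T.dist (f u) (f v) ≤ k))

/-- `G` is a `k`-leaf power: it admits a `k`-leaf root. -/
def IsKLeafPower {V : Type} (G : SimpleGraph V) (k : ℕ) : Prop :=
  ∃ (W : Type) (T : SimpleGraph W) (f : V → W), IsLeafRoot G k T f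

/-- `m_T(v)`: the minimum over all `u ≠ v` of the distance in the leaf root `T`
between the leaves corresponding to `u` and `v`. -/
noncomputable def mval {V W : Type} (T : SimpleGraph W) (f : V → W) (v : V) : ℕ :=
  sInf {d | ∃ u, u ≠ v ∧ T.dist (f u) (f v) = d}

/-- A vertex has degree at least three. -/
def HasDegreeGEThree {W : Type} (T : SimpleGraph W) (w : W) : Prop :=
  ∃ a b c : W, a ≠ b ∧ a ≠ c ∧ b ≠ c ∧ T.Adj w a ∧ T.Adj w b ∧ T.Adj w c

/-- A spine of a tree: a path containing every vertex of degree at least 3.  A tree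
having a spine is exactly a caterpillar subdivision. -/
def IsSpine {W : Type} (T : SimpleGraph W) {a b : W} (p : T.Walk a b) : Prop :=
  p.IsPath ∧ ∀ w : W, HasDegreeGEThree T w → w ∈ p.support

/-- A linear `k`-leaf root: a `k`-leaf root whose tree is a caterpillar subdivision. -/
def IsLinearLeafRoot {V W : Type} (G : SimpleGraph V) (k : ℕ)
    (T : SimpleGraph W) (f : V → W) : Prop :=
  IsLeafRoot G k T f ∧ ∃ (a b : W) (p : T.Walk a b), IsSpine T p

/-- `G` is a linear `k`-leaf power: it admits a linear `k`-leaf root. -/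
def IsLinearKLeafPower {V : Type} (G : SimpleGraph V) (k : ℕ) : Prop :=
  ∃ (W : Type) (T : SimpleGraph W) (f : V → W), IsLinearLeafRoot G k T f

/-- A cycle of length `n` in `G`, given as an injective map from `ZMod n` with
consecutive images adjacent. -/
def IsCycleIn {V : Type} (G : SimpleGraph V) (n : ℕ) (f : ZMod n → V) : Prop :=
  Function.Injective f ∧ ∀ i : ZMod n, G.Adj (f i) (f (i + 1))

/-- `G` is chordal: every cycle of length at least 4 has a chord. -/
def Chordal {V : Type} (G : SimpleGraph V) : Prop :=
  ∀ n : ℕ, 4 ≤ n → ∀ f : ZMod n → V, IsCycleIn G n f →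
    ∃ i j : ZMod n, j ≠ i ∧ j ≠ i + 1 ∧ j ≠ i - 1 ∧ G.Adj (f i) (f j)

/-- `G` is strongly chordal: chordal, and every even cycle of length at least 6 has
an odd chord (a chord joining two vertices an odd distance apart along the cycle). -/
def StronglyChordal {V : Type} (G : SimpleGraph V) : Prop :=
  Chordal G ∧ ∀ n : ℕ, 6 ≤ n → Even n → ∀ f : ZMod n → V, IsCycleIn G n f →
    ∃ i j : ZMod n, Odd ((j - i).val) ∧ j ≠ i + 1 ∧ j ≠ i - 1 ∧ G.Adj (f i) (f j)

/-- Vertices of the even interior gadget for `k = 2q`: `t`, `b`, `z1`, `z2`,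
`x i` for `i : Fin q` (representing `x_{i+1}`), and `y i` for `i : Fin (q-1)`
(representing `y_{i+2}`). -/
inductive JVert (q : ℕ) : Type where
  | t : JVert q
  | b : JVert q
  | z1 : JVert q
  | z2 : JVert q
  | x : Fin q → JVert q
  | y : Fin (q - 1) → JVert q

/-- The even interior gadget `J_k` for even `k = 2q ≥ 6`: edges `t x_i` for all
`1 ≤ i ≤ q`; `b x_i`, `z1 x_i`, `z2 x_i` for all `2 ≤ i ≤ q`; `x_i x_j` for `i < j`;
`y_i x_j` for `2 ≤ i ≤ j ≤ q`; `b y_q`; `b z1`; and `b z2`. -/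
def evenGadget (q : ℕ) : SimpleGraph (JVert q) :=
  SimpleGraph.fromRel (fun u v => match u, v with
    | .t, .x _ => True
    | .b, .x i => 1 ≤ (i : ℕ)
    | .z1, .x i => 1 ≤ (i : ℕ)
    | .z2, .x i => 1 ≤ (i : ℕ)
    | .x i, .x j => i ≠ j
    | .y a, .x c => (a : ℕ) + 1 ≤ (c : ℕ)
    | .b, .y a => (a : ℕ) = q - 2
    | .b, .z1 => True
    | .b, .z2 => True
    | _, _ => False)

namespace EGaux
variable {q : ℕ}

def P (q : ℕ) : JVert q → ℕ
  | .t => 0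
  | .b => q + 1
  | .z1 => 2
  | .z2 => 3
  | .x j => (j : ℕ) + 1
  | .y a => if (a : ℕ) = q - 2 then q + 1 else (a : ℕ) + 2

def L (q : ℕ) : JVert q → ℕ
  | .t => q - 1
  | .b => 1
  | .z1 => q
  | .z2 => q
  | .x j => q - (j : ℕ)
  | .y a => if (a : ℕ) = q - 2 then 2 * q - 2 else q + (a : ℕ) + 1

lemma P_le (hq : 3 ≤ q) (v : JVert q) : P q v ≤ q + 1 := by
  cases v with
  | x j => have := j.isLt; simp only [P]; omega
  | y a => have := a.isLt; simp only [P]; split <;> omega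
  | _ => simp only [P] <;> omega

lemma L_pos (hq : 3 ≤ q) (v : JVert q) : 1 ≤ L q v := by
  cases v with
  | x j => have := j.isLt; simp only [L]; omega
  | y a => have := a.isLt; simp only [L]; split <;> omega
  | _ => simp only [L] <;> omega

lemma L_le (v : JVert q) : L q v ≤ 2 * q + 1 := by
  cases v with
  | x j => have := j.isLt; simp only [L]; omega
  | y a => have := a.isLt; simp only [L]; split <;> omega
  | _ => simp only [L] <;> omega

def encF : JVert q → Fin 6 × Fin (q + 1)
  | .t => (0, 0)
  | .b => (1, 0)
  | .z1 => (2, 0)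
  | .z2 => (3, 0)
  | .x j => (4, ⟨(j : ℕ), by have := j.isLt; omega⟩)
  | .y a => (5, ⟨(a : ℕ), by have := a.isLt; omega⟩)

lemma encF_inj : Function.Injective (encF (q := q)) := by
  intro u v h
  cases u <;> cases v <;> simp only [encF, Prod.mk.injEq, Fin.mk.injEq] at h <;>
    first
      | rfl
      | (exfalso; exact absurd h.1 (by decide))
      | (congr 1; exact Fin.ext h.2)

instance : DecidableEq (JVert q) := encF_inj.decidableEq
instance : Finite (JVert q) := Finite.of_injective _ encF_inj
def valid (q : ℕ) : Option (JVert q) × ℕ → Prop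
  | (none, n) => n ≤ q + 1
  | (some v, i) => 1 ≤ i ∧ i ≤ L q v

abbrev W (q : ℕ) : Type := {p : Option (JVert q) × ℕ // valid q p}

instance : Finite (Option (JVert q)) :=
  Finite.of_equiv _ (Equiv.optionEquivSumPUnit.{0,0} (JVert q)).symm

instance : Finite (W q) := by
  have hb : ∀ w : W q, w.1.2 < 2 * q + 2 := by
    rintro ⟨⟨(_ | v), n⟩, hv⟩
    · simp only [valid] at hv; show n < 2 * q + 2; omega
    · have := L_le v; simp only [valid] at hv; show n < 2 * q + 2; omega
  apply Finite.of_injective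
    (fun w : W q => ((w.1.1, ⟨w.1.2, hb w⟩) : Option (JVert q) × Fin (2 * q + 2)))
  intro a b h
  simp only [Prod.mk.injEq, Fin.mk.injEq] at h
  exact Subtype.ext (Prod.ext h.1 h.2)

/-- spine vertex -/
def sp (n : ℕ) (h : n ≤ q + 1) : W q := ⟨(none, n), h⟩
/-- leg vertex -/
def lg (v : JVert q) (i : ℕ) (h1 : 1 ≤ i) (h2 : i ≤ L q v) : W q := ⟨(some v, i), h1, h2⟩

def R (q : ℕ) : W q → W q → Prop := fun a b =>
  match a, b with
  | ⟨(none, n), _⟩, ⟨(none, m), _⟩ => m = n + 1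
  | ⟨(none, n), _⟩, ⟨(some v, i), _⟩ => n = P q v ∧ i = 1
  | ⟨(some _, _), _⟩, ⟨(none, _), _⟩ => False
  | ⟨(some v, i), _⟩, ⟨(some w, j), _⟩ => v = w ∧ j = i + 1

def T (q : ℕ) : SimpleGraph (W q) := SimpleGraph.fromRel (R q)

lemma adj_iff {a b : W q} : (T q).Adj a b ↔ a ≠ b ∧ (R q a b ∨ R q b a) :=
  SimpleGraph.fromRel_adj _ _ _

lemma adj_spine (n : ℕ) (h1 : n ≤ q + 1) (h2 : n + 1 ≤ q + 1) :
    (T q).Adj (sp n h1) (sp (n + 1) h2) := by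
  rw [adj_iff]
  exact ⟨by simp [sp, Subtype.ext_iff], Or.inl rfl⟩

lemma adj_leg_base (v : JVert q) (h2 : 1 ≤ L q v) (hp : P q v ≤ q + 1) :
    (T q).Adj (sp (P q v) hp) (lg v 1 le_rfl h2) := by
  rw [adj_iff]
  exact ⟨by simp [sp, lg, Subtype.ext_iff], Or.inl ⟨rfl, rfl⟩⟩

lemma adj_leg_step (v : JVert q) (i : ℕ) (h1 : 1 ≤ i) (h2 : i + 1 ≤ L q v) :
    (T q).Adj (lg v i h1 (by omega)) (lg v (i + 1) (by omega) h2) := by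
  rw [adj_iff]
  exact ⟨by simp [lg, Subtype.ext_iff], Or.inl ⟨rfl, rfl⟩⟩

/-- absolute difference -/
def nd (a b : ℕ) : ℕ := (a - b) + (b - a)

def D : W q → W q → ℕ
  | ⟨(none, n), _⟩, ⟨(none, m), _⟩ => nd n m
  | ⟨(none, n), _⟩, ⟨(some w, j), _⟩ => nd n (P q w) + j
  | ⟨(some v, i), _⟩, ⟨(none, m), _⟩ => nd (P q v) m + i
  | ⟨(some v, i), _⟩, ⟨(some w, j), _⟩ => nd (P q v) (P q w) + (if v = w then nd i j else i + j)

lemma D_self (u : W q) : D u u = 0 := by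
  obtain ⟨⟨(_ | v), n⟩, hv⟩ := u <;> simp [D, nd]

lemma D_lip (u : W q) {a b : W q} (h : (T q).Adj a b) : D a u ≤ D b u + 1 := by
  rw [adj_iff] at h
  obtain ⟨hne, h⟩ := h
  obtain ⟨⟨(_ | va), ia⟩, hva⟩ := a
  all_goals obtain ⟨⟨(_ | vb), ib⟩, hvb⟩ := b
  all_goals obtain ⟨⟨(_ | vu), iu⟩, hvu⟩ := u
  all_goals simp only [R, valid, false_or, or_false] at h hva hvb hvu
  all_goals simp only [D, nd]
  · omega
  · omega
  · obtain ⟨rfl, rfl⟩ := h; omega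
  · obtain ⟨rfl, rfl⟩ := h
    by_cases hv : vb = vu
    · subst hv; rw [if_pos rfl]; omega
    · rw [if_neg hv]; omega
  · obtain ⟨rfl, rfl⟩ := h; omega
  · obtain ⟨rfl, rfl⟩ := h
    by_cases hv : va = vu
    · subst hv; rw [if_pos rfl]; omega
    · rw [if_neg hv]; omega
  · obtain (⟨rfl, rfl⟩ | ⟨rfl, rfl⟩) := h
    · omega
    · omega
  · obtain (⟨rfl, rfl⟩ | ⟨rfl, rfl⟩) := h
    · by_cases hv : va = vu
      · subst hv; rw [if_pos rfl, if_pos rfl]; omega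
      · rw [if_neg hv, if_neg hv]; omega
    · by_cases hv : vb = vu
      · subst hv; rw [if_pos rfl, if_pos rfl]; omega
      · rw [if_neg hv, if_neg hv]; omega
lemma sp_eq {n m : ℕ} (hn : n ≤ q + 1) (hm : m ≤ q + 1) (hnm : n = m) :
    sp n hn = sp (q := q) m hm := Subtype.ext (by simp [sp, hnm])

def rank : W q → ℕ
  | ⟨(none, n), _⟩ => n
  | ⟨(some v, i), _⟩ => P q v + i

lemma rank_none (n : ℕ) (h : valid q (none, n)) : rank (⟨(none, n), h⟩ : W q) = n := rfl
lemma rank_some (v : JVert q) (i : ℕ) (h : valid q (some v, i)) :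
    rank (⟨(some v, i), h⟩ : W q) = P q v + i := rfl

lemma D_le_length {a b : W q} (p : (T q).Walk a b) : D a b ≤ p.length := by
  induction p with
  | nil => simp [D_self]
  | @cons a c b h p ih =>
    have := D_lip b h
    rw [SimpleGraph.Walk.length_cons]
    omega

lemma exists_walk_spine_up (n k : ℕ) (h : n + k ≤ q + 1) :
    ∃ p : (T q).Walk (sp n (by omega)) (sp (n + k) h), p.length = k := by
  revert h
  induction k with
  | zero => exact fun h => ⟨SimpleGraph.Walk.nil, rfl⟩
  | succ k ih =>
    intro h
    obtain ⟨p, hp⟩ := ih (by omega)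
    exact ⟨p.concat (adj_spine (n + k) (by omega) h),
      by rw [SimpleGraph.Walk.length_concat, hp]⟩

lemma exists_walk_spine (n m : ℕ) (hn : n ≤ q + 1) (hm : m ≤ q + 1) :
    ∃ p : (T q).Walk (sp n hn) (sp m hm), p.length = nd n m := by
  rcases le_total n m with hle | hle
  · obtain ⟨p, hp⟩ := exists_walk_spine_up (q := q) n (m - n) (by omega)
    refine ⟨(p.copy rfl (sp_eq (n := n + (m - n)) (m := m) (by omega) hm (by omega))), ?_⟩
    rw [SimpleGraph.Walk.length_copy, hp]
    simp only [nd]; omega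
  · obtain ⟨p, hp⟩ := exists_walk_spine_up (q := q) m (n - m) (by omega)
    refine ⟨(p.copy rfl (sp_eq (n := m + (n - m)) (m := n) (by omega) hn (by omega))).reverse, ?_⟩
    rw [SimpleGraph.Walk.length_reverse, SimpleGraph.Walk.length_copy, hp]
    simp only [nd]; omega

lemma exists_walk_leg (v : JVert q) (i : ℕ) (h1 : 1 ≤ i) (h2 : i ≤ L q v)
    (hp : P q v ≤ q + 1) :
    ∃ p : (T q).Walk (lg v i h1 h2) (sp (P q v) hp), p.length = i := by
  revert h2
  induction i, h1 using Nat.le_induction with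
  | base => exact fun h2 => ⟨SimpleGraph.Walk.cons (adj_leg_base v h2 hp).symm .nil, rfl⟩
  | succ i hi ih =>
    intro h2
    obtain ⟨p, hp'⟩ := ih (by omega)
    exact ⟨SimpleGraph.Walk.cons (adj_leg_step v i hi h2).symm p,
      by rw [SimpleGraph.Walk.length_cons, hp']⟩

lemma connected (hq : 3 ≤ q) : (T q).Connected := by
  have hreach : ∀ w : W q, (T q).Reachable w (sp 0 (by omega)) := by
    rintro ⟨⟨(_ | v), n⟩, hv⟩
    · obtain ⟨p, -⟩ := exists_walk_spine (q := q) n 0 hv (by omega)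
      exact p.reachable
    · obtain ⟨p, -⟩ := exists_walk_leg v n hv.1 hv.2 (P_le hq v)
      obtain ⟨p2, -⟩ := exists_walk_spine (q := q) (P q v) 0 (P_le hq v) (by omega)
      exact p.reachable.trans p2.reachable
  haveI : Nonempty (W q) := ⟨sp 0 (by omega)⟩
  exact SimpleGraph.Connected.mk (fun u v => (hreach u).trans (hreach v).symm)

lemma rank_lower_unique {a b c : W q} (hab : (T q).Adj a b) (hac : (T q).Adj a c)
    (hb : rank b < rank a) (hc : rank c < rank a) : b = c := by
  rw [adj_iff] at hab hac
  obtain ⟨-, hab⟩ := hab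
  obtain ⟨-, hac⟩ := hac
  obtain ⟨⟨(_ | va), ia⟩, hva⟩ := a
  all_goals obtain ⟨⟨(_ | vb), ib⟩, hvb⟩ := b
  all_goals obtain ⟨⟨(_ | vc), ic⟩, hvc⟩ := c
  all_goals simp only [R, valid, false_or, or_false] at hab hac hva hvb hvc
  · -- a,b,c spine
    have hb2 : ib < ia := hb
    have hc2 : ic < ia := hc
    have : ib = ic := by omega
    subst this; rfl
  · -- a,b spine, c leg
    have hc2 : P q vc + ic < ia := hc
    obtain ⟨rfl, rfl⟩ := hac; exfalso; omega
  · have hb2 : P q vb + ib < ia := hb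
    obtain ⟨rfl, rfl⟩ := hab; exfalso; omega
  · have hb2 : P q vb + ib < ia := hb
    obtain ⟨rfl, rfl⟩ := hab; exfalso; omega
  · -- a leg, b,c spine
    obtain ⟨rfl, rfl⟩ := hab
    obtain ⟨h1, h2⟩ := hac
    have : ic = P q va := h1
    subst this; rfl
  · -- a leg, b spine, c leg
    have hc2 : P q vc + ic < P q va + ia := hc
    obtain ⟨rfl, rfl⟩ := hab
    obtain (⟨rfl, h2⟩ | ⟨rfl, h2⟩) := hac <;> (exfalso; omega)
  · have hb2 : P q vb + ib < P q va + ia := hb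
    obtain ⟨rfl, rfl⟩ := hac
    obtain (⟨rfl, h2⟩ | ⟨rfl, h2⟩) := hab <;> (exfalso; omega)
  · -- all legs
    have hb2 : P q vb + ib < P q va + ia := hb
    have hc2 : P q vc + ic < P q va + ia := hc
    obtain (⟨rfl, h2⟩ | ⟨rfl, hia⟩) := hab
    · exfalso; omega
    · obtain (⟨rfl, h3⟩ | ⟨rfl, hic⟩) := hac
      · exfalso; omega
      · have : ib = ic := by omega
        subst this; rfl

lemma rank_adj_ne {a b : W q} (h : (T q).Adj a b) : rank a ≠ rank b := by
  rw [adj_iff] at h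
  obtain ⟨-, h⟩ := h
  obtain ⟨⟨(_ | va), ia⟩, hva⟩ := a
  all_goals obtain ⟨⟨(_ | vb), ib⟩, hvb⟩ := b
  all_goals simp only [R, valid, false_or, or_false] at h hva hvb
  · show ia ≠ ib; omega
  · show ia ≠ P q vb + ib; obtain ⟨rfl, rfl⟩ := h; omega
  · show P q va + ia ≠ ib; obtain ⟨rfl, rfl⟩ := h; omega
  · show P q va + ia ≠ P q vb + ib
    obtain (⟨rfl, rfl⟩ | ⟨rfl, rfl⟩) := h <;> omega

lemma exists_last_edge : ∀ {a w : W q} (p : (T q).Walk a w), 0 < p.length →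
    ∃ b, (T q).Adj b w ∧ s(b, w) ∈ p.edges ∧ b ∈ p.support := by
  intro a w p
  induction p with
  | nil => simp
  | @cons a c w h p ih =>
    intro _
    cases p with
    | nil => exact ⟨a, h, by simp, by simp⟩
    | @cons c d w h2 p3 =>
      obtain ⟨b, hb1, hb2, hb3⟩ := ih (by simp)
      refine ⟨b, hb1, ?_, ?_⟩
      · rw [SimpleGraph.Walk.edges_cons]
        exact List.mem_cons_of_mem _ hb2
      · rw [SimpleGraph.Walk.support_cons]
        exact List.mem_cons_of_mem _ hb3

lemma acyclic : (T q).IsAcyclic := by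
  classical
  intro v c hc
  obtain ⟨w, hw, hmax⟩ := Finset.exists_max_image c.support.toFinset rank
    ⟨v, by simp [List.mem_toFinset]⟩
  rw [List.mem_toFinset] at hw
  have pack : ∃ c' : (T q).Walk w w, c'.IsCycle ∧ ∀ u ∈ c'.support, rank u ≤ rank w := by
    refine ⟨c.rotate w hw, hc.rotate hw, ?_⟩
    intro u hu
    rw [SimpleGraph.Walk.mem_support_iff] at hu
    rcases hu with rfl | hu
    · exact le_refl _
    · refine hmax u ?_
      rw [List.mem_toFinset]
      exact List.mem_of_mem_tail ((SimpleGraph.Walk.support_rotate c w hw).mem_iff.mp hu)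
  obtain ⟨c', hc', hsup⟩ := pack
  cases c' with
  | nil => exact SimpleGraph.Walk.IsCycle.not_of_nil hc'
  | @cons w a w' hadj p =>
    rw [SimpleGraph.Walk.cons_isCycle_iff] at hc'
    obtain ⟨hp, hed⟩ := hc'
    have hlen : 0 < p.length := by
      cases p with
      | nil => exact absurd rfl hadj.ne
      | cons h2 p3 => simp
    obtain ⟨b, hb1, hb2, hb3⟩ := exists_last_edge p hlen
    have hba : b ≠ a := by
      rintro rfl
      exact hed (by rwa [Sym2.eq_swap] at hb2)
    have hra : rank a ≤ rank w :=
      hsup a (by simp [SimpleGraph.Walk.mem_support_iff, SimpleGraph.Walk.start_mem_support])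
    have hrb : rank b ≤ rank w := by
      refine hsup b ?_
      rw [SimpleGraph.Walk.support_cons]
      exact List.mem_cons_of_mem _ hb3
    have h1 : rank a < rank w := lt_of_le_of_ne hra (fun h => rank_adj_ne hadj h.symm)
    have h2 : rank b < rank w := lt_of_le_of_ne hrb (fun h => rank_adj_ne hb1 h)
    exact hba (rank_lower_unique hb1.symm hadj h2 h1)

lemma isTree (hq : 3 ≤ q) : (T q).IsTree := ⟨connected hq, acyclic⟩
def f (hq : 3 ≤ q) (v : JVert q) : W q := lg v (L q v) (L_pos hq v) le_rfl

lemma f_inj (hq : 3 ≤ q) : Function.Injective (f hq) := by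
  intro u v h
  have := congrArg (fun w : W q => w.1.1) h
  simpa [f, lg] using this

lemma dist_f (hq : 3 ≤ q) (u v : JVert q) (huv : u ≠ v) :
    (T q).dist (f hq u) (f hq v) = nd (P q u) (P q v) + (L q u + L q v) := by
  apply le_antisymm
  · obtain ⟨p1, hp1⟩ := exists_walk_leg u (L q u) (L_pos hq u) le_rfl (P_le hq u)
    obtain ⟨p2, hp2⟩ := exists_walk_spine (q := q) (P q u) (P q v) (P_le hq u) (P_le hq v)
    obtain ⟨p3, hp3⟩ := exists_walk_leg v (L q v) (L_pos hq v) le_rfl (P_le hq v)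
    have hd := SimpleGraph.dist_le (p1.append (p2.append p3.reverse))
    rw [SimpleGraph.Walk.length_append, SimpleGraph.Walk.length_append,
      SimpleGraph.Walk.length_reverse, hp1, hp2, hp3] at hd
    exact le_trans hd (by omega)
  · obtain ⟨p, hp⟩ :=
      SimpleGraph.Reachable.exists_walk_length_eq_dist
        ((connected hq).preconnected (f hq u) (f hq v))
    have hD := D_le_length p
    rw [hp] at hD
    refine le_trans (le_of_eq ?_) hD
    show nd (P q u) (P q v) + (L q u + L q v) = D (f hq u) (f hq v)
    simp only [f, lg, D]
    rw [if_neg huv]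

lemma leaf_iff (hq : 3 ≤ q) (w : W q) :
    (∃ v, f hq v = w) ↔ ∃! u, (T q).Adj w u := by
  obtain ⟨⟨(_ | v), i⟩, hv⟩ := w
  · -- spine vertex: not a leaf, not in image
    have hv' : i ≤ q + 1 := hv
    constructor
    · rintro ⟨v, hfv⟩
      exact absurd (congrArg (fun w : W q => w.1.1) hfv) (by simp [f, lg])
    · rintro ⟨u, hu, huniq⟩
      exfalso
      -- find two distinct neighbours
      by_cases h0 : i = 0
      · subst h0
        have ha1 : (T q).Adj ⟨(none, 0), hv⟩ (sp 1 (by omega)) := by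
          rw [adj_iff]
          exact ⟨fun e => by simpa [sp] using congrArg (fun w : W q => w.1.2) e,
            Or.inl (by exact rfl)⟩
        have ha2 : (T q).Adj ⟨(none, 0), hv⟩ (lg JVert.t 1 le_rfl (L_pos hq _)) := by
          rw [adj_iff]
          refine ⟨fun e => by simpa [lg] using congrArg (fun w : W q => w.1.1) e,
            Or.inl ?_⟩
          exact ⟨by simp [P], rfl⟩
        have e1 := huniq _ ha1
        have e2 := huniq _ ha2
        rw [← e2] at e1
        exact absurd (congrArg (fun w : W q => w.1.1) e1) (by simp [sp, lg])
      · by_cases hq1 : i ≤ q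
        · have ha1 : (T q).Adj ⟨(none, i), hv⟩ (sp (i - 1) (by omega)) := by
            rw [adj_iff]
            refine ⟨fun e => by
              have := congrArg (fun w : W q => w.1.2) e
              simp only [sp] at this
              omega, Or.inr (by show i = (i - 1) + 1; omega)⟩
          have ha2 : (T q).Adj ⟨(none, i), hv⟩ (sp (i + 1) (by omega)) := by
            rw [adj_iff]
            refine ⟨fun e => by
              have := congrArg (fun w : W q => w.1.2) e
              simp only [sp] at this
              omega, Or.inl rfl⟩
          have e1 := huniq _ ha1
          have e2 := huniq _ ha2
          rw [← e2] at e1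
          have := congrArg (fun w : W q => w.1.2) e1
          simp only [sp] at this
          omega
        · -- i = q + 1
          have hiq : i = q + 1 := by omega
          subst hiq
          have ha1 : (T q).Adj ⟨(none, q + 1), hv⟩ (sp q (by omega)) := by
            rw [adj_iff]
            refine ⟨fun e => by
              have := congrArg (fun w : W q => w.1.2) e
              simp only [sp] at this
              omega, Or.inr rfl⟩
          have ha2 : (T q).Adj ⟨(none, q + 1), hv⟩ (lg JVert.b 1 le_rfl (by simp [L])) := by
            rw [adj_iff]
            refine ⟨fun e => by simpa [lg] using congrArg (fun w : W q => w.1.1) e,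
              Or.inl ?_⟩
            exact ⟨by simp [P], rfl⟩
          have e1 := huniq _ ha1
          have e2 := huniq _ ha2
          rw [← e2] at e1
          exact absurd (congrArg (fun w : W q => w.1.1) e1) (by simp [sp, lg])
  · -- leg vertex (v, i)
    have hv1 : 1 ≤ i := hv.1
    have hv2 : i ≤ L q v := hv.2
    by_cases htop : i = L q v
    · -- leaf, in image
      subst htop
      constructor
      · intro _
        -- build the ∃!
        by_cases h1 : L q v = 1
        · refine ⟨sp (P q v) (P_le hq v), ?_, ?_⟩
          · show (T q).Adj _ _
            rw [adj_iff]
            refine ⟨fun e => by simpa [sp] using congrArg (fun w : W q => w.1.1) e,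
              Or.inr ⟨rfl, h1⟩⟩
          · rintro ⟨⟨(_ | w'), j⟩, hw⟩ hadj
            · rw [adj_iff] at hadj
              obtain ⟨-, h | h⟩ := hadj
              · exact absurd h (by simp [R])
              · obtain ⟨h2, h3⟩ := h
                subst h2
                rfl
            · rw [adj_iff] at hadj
              obtain ⟨-, h | h⟩ := hadj
              · obtain ⟨rfl, h3⟩ := h
                exfalso
                have := hw.2
                omega
              · obtain ⟨rfl, h3⟩ := h
                exfalso
                have := hw.1
                omega
        · refine ⟨lg v (L q v - 1) (by omega) (by omega), ?_, ?_⟩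
          · show (T q).Adj _ _
            rw [adj_iff]
            refine ⟨fun e => by
              have := congrArg (fun w : W q => w.1.2) e
              simp only [lg] at this
              omega, Or.inr ⟨rfl, by omega⟩⟩
          · rintro ⟨⟨(_ | w'), j⟩, hw⟩ hadj
            · rw [adj_iff] at hadj
              obtain ⟨-, h | h⟩ := hadj
              · exact absurd h (by simp [R])
              · obtain ⟨h2, h3⟩ := h
                exact absurd h3 h1
            · rw [adj_iff] at hadj
              obtain ⟨-, h | h⟩ := hadj
              · obtain ⟨rfl, h3⟩ := h
                exfalso
                have := hw.2
                omega
              · obtain ⟨rfl, h3⟩ := h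
                have : j = L q w' - 1 := by omega
                subst this
                rfl
      · intro _
        exact ⟨v, rfl⟩
    · -- interior leg vertex: not a leaf, not in image
      constructor
      · rintro ⟨v', hfv⟩
        exfalso
        have h1 := congrArg (fun w : W q => w.1.1) hfv
        have h2 := congrArg (fun w : W q => w.1.2) hfv
        simp only [f, lg, Option.some.injEq] at h1 h2
        subst h1
        exact htop h2.symm
      · rintro ⟨u, hu, huniq⟩
        exfalso
        have ha1 : (T q).Adj ⟨(some v, i), hv⟩ (lg v (i + 1) (by omega) (by omega)) := by
          rw [adj_iff]
          refine ⟨fun e => by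
            have := congrArg (fun w : W q => w.1.2) e
            simp only [lg] at this
            omega, Or.inl ⟨rfl, rfl⟩⟩
        by_cases h1 : i = 1
        · have ha2 : (T q).Adj ⟨(some v, i), hv⟩ (sp (P q v) (P_le hq v)) := by
            rw [adj_iff]
            refine ⟨fun e => by simpa [sp] using congrArg (fun w : W q => w.1.1) e,
              Or.inr ⟨rfl, h1⟩⟩
          have e1 := huniq _ ha1
          have e2 := huniq _ ha2
          rw [← e2] at e1
          exact absurd (congrArg (fun w : W q => w.1.1) e1) (by simp [sp, lg])
        · have ha2 : (T q).Adj ⟨(some v, i), hv⟩ (lg v (i - 1) (by omega) (by omega)) := by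
            rw [adj_iff]
            refine ⟨fun e => by
              have := congrArg (fun w : W q => w.1.2) e
              simp only [lg] at this
              omega, Or.inr ⟨rfl, by omega⟩⟩
          have e1 := huniq _ ha1
          have e2 := huniq _ ha2
          rw [← e2] at e1
          have := congrArg (fun w : W q => w.1.2) e1
          simp only [lg] at this
          omega
lemma adj_gadget (hq : 3 ≤ q) (u v : JVert q) (huv : u ≠ v) :
    (evenGadget q).Adj u v ↔ (T q).dist (f hq u) (f hq v) ≤ 2 * q := by
  rw [dist_f hq u v huv, evenGadget, SimpleGraph.fromRel_adj]
  rcases u with _ | _ | _ | _ | j | a <;> rcases v with _ | _ | _ | _ | j' | a' <;>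
    simp only [ne_eq, not_false_eq_true, true_and, false_or, or_false, or_self,
      P, L, nd, reduceCtorEq, iff_false, false_iff, not_false_eq_true] <;>
    try omega
  all_goals (try (split_ifs <;> omega))
  case t.t => exact absurd rfl huv
  case b.b => exact absurd rfl huv
  case z1.z1 => exact absurd rfl huv
  case z2.z2 => exact absurd rfl huv
  case t.x => rw [true_iff]; have := j'.isLt; omega
  case x.t => rw [true_iff]; have := j.isLt; omega
  case b.z1 => rw [true_iff]; omega
  case b.z2 => rw [true_iff]; omega
  case z1.b => rw [true_iff]; omega
  case z2.b => rw [true_iff]; omega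
  case x.x =>
    have hne : ¬ j = j' := fun h => huv (congrArg JVert.x h)
    have hval : (j : ℕ) ≠ (j' : ℕ) := fun h => hne (Fin.ext h)
    have h1 := j.isLt
    have h2 := j'.isLt
    constructor
    · intro _; omega
    · intro _; exact ⟨huv, Or.inl hne⟩
  case y.y =>
    have hne : ¬ a = a' := fun h => huv (congrArg JVert.y h)
    have hval : (a : ℕ) ≠ (a' : ℕ) := fun h => hne (Fin.ext h)
    have h1 := a.isLt
    have h2 := a'.isLt
    simp only [and_false, false_iff]
    split_ifs <;> omega
lemma mval_t (hq : 3 ≤ q) :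
    sInf {d | ∃ u, u ≠ JVert.t ∧ (T q).dist (f hq u) (f hq JVert.t) = d} = 2 * q := by
  have hwit : (JVert.x ⟨0, by omega⟩ : JVert q) ≠ JVert.t := by simp
  have hdist : (T q).dist (f hq (JVert.x ⟨0, by omega⟩)) (f hq JVert.t) = 2 * q := by
    rw [dist_f hq _ _ hwit]
    simp only [P, L, nd]
    omega
  apply le_antisymm
  · exact Nat.sInf_le ⟨_, hwit, hdist⟩
  · refine le_csInf ⟨2 * q, _, hwit, hdist⟩ ?_
    rintro d ⟨u, hu, rfl⟩
    rw [dist_f hq u _ hu]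
    rcases u with _ | _ | _ | _ | j | a
    · exact absurd rfl hu
    · simp only [P, L, nd]; omega
    · simp only [P, L, nd]; omega
    · simp only [P, L, nd]; omega
    · have := j.isLt; simp only [P, L, nd]; omega
    · have := a.isLt; simp only [P, L, nd]; split_ifs <;> omega

lemma mval_b (hq : 3 ≤ q) :
    sInf {d | ∃ u, u ≠ JVert.b ∧ (T q).dist (f hq u) (f hq JVert.b) = d} = 3 := by
  have hwit : (JVert.x ⟨q - 1, by omega⟩ : JVert q) ≠ JVert.b := by simp
  have hdist : (T q).dist (f hq (JVert.x ⟨q - 1, by omega⟩)) (f hq JVert.b) = 3 := by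
    rw [dist_f hq _ _ hwit]
    simp only [P, L, nd]
    omega
  apply le_antisymm
  · exact Nat.sInf_le ⟨_, hwit, hdist⟩
  · refine le_csInf ⟨3, _, hwit, hdist⟩ ?_
    rintro d ⟨u, hu, rfl⟩
    rw [dist_f hq u _ hu]
    rcases u with _ | _ | _ | _ | j | a
    · simp only [P, L, nd]; omega
    · exact absurd rfl hu
    · simp only [P, L, nd]; omega
    · simp only [P, L, nd]; omega
    · have := j.isLt; simp only [P, L, nd]; omega
    · have := a.isLt; simp only [P, L, nd]; split_ifs <;> omega
end EGaux

theorem even_gadget_root_T (q : ℕ) (hq : 3 ≤ q) (k : ℕ) (hk : k = 2 * q) :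
    ∃ (W : Type) (T : SimpleGraph W) (f : JVert q → W),
      IsLeafRoot (evenGadget q) k T f ∧
      mval T f JVert.t = k ∧ mval T f JVert.b = 3 := by
  subst hk
  exact ⟨EGaux.W q, EGaux.T q, EGaux.f hq,
    ⟨inferInstance, EGaux.isTree hq, EGaux.f_inj hq,
      fun w => EGaux.leaf_iff hq w,
      fun u v huv => EGaux.adj_gadget hq u v huv⟩,
    EGaux.mval_t hq, EGaux.mval_b hq⟩
end

section
/- Fix an even integer k = 2q ≥ 6 and let J_k be the even interior gadget. Then there exists a k-leaf root R of J_k such that m_R(t) = k−1 and m_R(b) = 4. -/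
open SimpleGraph

namespace EGRAux

variable {W : Type} (G : SimpleGraph W)

lemma walk_phi_le (φ : W → ℕ) (lip : ∀ a b : W, G.Adj a b → φ b ≤ φ a + 1)
    {a b : W} (p : G.Walk a b) : φ b ≤ p.length + φ a := by
  induction p with
  | nil => simp
  | @cons u v w hadj p ih =>
    have := lip _ _ hadj
    simp only [Walk.length_cons]
    omega

lemma reachable_and_dist_le (u : W) (φ : W → ℕ)
    (desc : ∀ w : W, w ≠ u → ∃ w', G.Adj w w' ∧ φ w' + 1 = φ w) :
    ∀ w : W, G.Reachable u w ∧ G.dist u w ≤ φ w := by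
  intro w
  generalize hn : φ w = n
  induction n using Nat.strong_induction_on generalizing w with
  | _ n ih =>
    by_cases hwu : w = u
    · subst hwu; exact ⟨Reachable.refl _, by rw [SimpleGraph.dist_self]; exact Nat.zero_le _⟩
    · obtain ⟨w', hadj, hstep⟩ := desc w hwu
      obtain ⟨hr, hd⟩ := ih (φ w') (by omega) w' rfl
      obtain ⟨pw, hpw⟩ := hr.exists_walk_length_eq_dist
      refine ⟨hr.trans hadj.symm.reachable, ?_⟩
      have h2 := G.dist_le (pw.concat hadj.symm)
      rw [Walk.length_concat] at h2
      omega

lemma dist_eq_of_potential (u : W) (φ : W → ℕ) (h0 : φ u = 0)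
    (desc : ∀ w : W, w ≠ u → ∃ w', G.Adj w w' ∧ φ w' + 1 = φ w)
    (lip : ∀ a b : W, G.Adj a b → φ b ≤ φ a + 1) :
    ∀ w : W, G.dist u w = φ w := by
  intro w
  obtain ⟨hr, hd⟩ := reachable_and_dist_le G u φ desc w
  refine le_antisymm hd ?_
  obtain ⟨pw, hpw⟩ := hr.exists_walk_length_eq_dist
  have := walk_phi_le G φ lip pw
  omega

lemma support_getElem {a b : W} (p : G.Walk a b) (i : ℕ) (h : i < p.support.length) :
    p.support[i] = p.getVert i := by
  induction p generalizing i with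
  | nil =>
    simp only [Walk.support_nil, List.length_singleton] at h
    interval_cases i
    simp
  | @cons u v w hadj p ih =>
    cases i with
    | zero => simp
    | succ n =>
      simp only [Walk.support_cons, List.length_cons] at h ⊢
      rw [List.getElem_cons_succ, ih n (by omega), Walk.getVert_cons_succ]

lemma isAcyclic_of_potential (φ : W → ℕ)
    (step : ∀ a b : W, G.Adj a b → φ a + 1 = φ b ∨ φ b + 1 = φ a)
    (uniq : ∀ w a b : W, G.Adj w a → G.Adj w b → φ a + 1 = φ w → φ b + 1 = φ w → a = b) :
    G.IsAcyclic := by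
  intro v p hp
  classical
  cases e : List.argmax φ p.support with
  | none => exact p.support_ne_nil (List.argmax_eq_none.mp e)
  | some m =>
    have hmem : m ∈ p.support := List.argmax_mem e
    have hmax : ∀ a ∈ p.support, φ a ≤ φ m := fun a ha => List.le_of_mem_argmax ha e
    set p' := p.rotate m hmem with hp'def
    have hp' : p'.IsCycle := hp.rotate hmem
    have hlen : 3 ≤ p'.length := hp'.three_le_length
    have hsup : ∀ a ∈ p'.support, φ a ≤ φ m := by
      intro a ha
      rw [Walk.support_eq_cons] at ha
      rcases List.mem_cons.mp ha with h1 | h1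
      · subst h1; exact le_rfl
      · exact hmax a (List.mem_of_mem_tail
          (((Walk.support_rotate p m hmem).mem_iff).mp h1))
    set b := p'.getVert 1 with hb
    set c := p'.getVert (p'.length - 1) with hc
    have hadjb : G.Adj m b := by
      have := p'.adj_getVert_succ (i := 0) (by omega)
      simpa using this
    have hadjc : G.Adj c m := by
      have h2 := p'.adj_getVert_succ (i := p'.length - 1) (by omega)
      have h3 : p'.length - 1 + 1 = p'.length := by omega
      rw [h3, Walk.getVert_length] at h2
      exact h2
    have hbs : b ∈ p'.support := Walk.mem_support_iff_exists_getVert.mpr ⟨1, rfl, by omega⟩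
    have hcs : c ∈ p'.support :=
      Walk.mem_support_iff_exists_getVert.mpr ⟨p'.length - 1, rfl, by omega⟩
    have hφb : φ b + 1 = φ m := by
      rcases step m b hadjb with h1 | h1
      · have := hsup b hbs; omega
      · exact h1
    have hφc : φ c + 1 = φ m := by
      rcases step c m hadjc with h1 | h1
      · exact h1
      · have := hsup c hcs; omega
    have hbc : b = c := uniq m b c hadjb hadjc.symm hφb hφc
    have hnodup : p'.support.tail.Nodup := hp'.support_nodup
    have hlsup : p'.support.length = p'.length + 1 := Walk.length_support p'
    have htl : p'.support.tail.length = p'.length := by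
      rw [List.length_tail, hlsup]; omega
    have e1 : p'.support.tail[0]'(by omega) = b := by
      rw [List.getElem_tail, support_getElem G p' 1 (by omega)]
    have e2 : p'.support.tail[p'.length - 2]'(by omega) = c := by
      rw [List.getElem_tail, support_getElem G p' _ (by omega)]
      congr 1
      omega
    have : (0 : ℕ) = p'.length - 2 := by
      rw [← hnodup.getElem_inj_iff (hi := by omega) (hj := by omega)]
      rw [e1, e2, hbc]
    omega

end EGRAux

deriving instance DecidableEq for JVert

namespace EGR
open EGRAux

def nd (a b : ℕ) : ℕ := (a - b) + (b - a)

variable (q : ℕ)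

def pf : JVert q → ℕ
  | .t => 0
  | .b => 2*q - 1
  | .z1 => q + 1
  | .z2 => q + 2
  | .x i => q - 1 + (i : ℕ)
  | .y a => if (a : ℕ) = q - 2 then 2*q - 1 else q + (a : ℕ)

def hf : JVert q → ℕ
  | .t => 1
  | .b => 2
  | .z1 => q
  | .z2 => q
  | .x i => if (i : ℕ) = q - 1 then 1 else q - 1 - (i : ℕ)
  | .y a => if (a : ℕ) = q - 2 then 2*q - 2 else q + 1 + (a : ℕ)

lemma hf_pos (hq : 3 ≤ q) : ∀ v : JVert q, 1 ≤ hf q v := by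
  intro v
  cases v with
  | x i => have := i.isLt; simp only [hf]; split_ifs <;> omega
  | y a => have := a.isLt; simp only [hf]; split_ifs <;> omega
  | _ => simp only [hf]; omega

lemma pf_le (hq : 3 ≤ q) : ∀ v : JVert q, pf q v ≤ 2*q - 1 := by
  intro v
  cases v with
  | x i => have := i.isLt; simp only [pf]; omega
  | y a => have := a.isLt; simp only [pf]; split_ifs <;> omega
  | _ => simp only [pf]; omega

lemma hf_le (hq : 3 ≤ q) : ∀ v : JVert q, hf q v ≤ 2*q := by
  intro v
  cases v with
  | x i => have := i.isLt; simp only [hf]; split_ifs <;> omega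
  | y a => have := a.isLt; simp only [hf]; split_ifs <;> omega
  | _ => simp only [hf]; omega

abbrev CV := ℕ ⊕ (JVert q × ℕ)

def ok : CV q → Prop
  | .inl x => x ≤ 2*q - 1
  | .inr (v, j) => 1 ≤ j ∧ j ≤ hf q v

abbrev CW := {w : CV q // ok q w}

def erel : CV q → CV q → Prop
  | .inl x, .inl x' => x' = x + 1 ∨ x = x' + 1
  | .inl x, .inr (v, j) => x = pf q v ∧ j = 1
  | .inr (v, j), .inl x => x = pf q v ∧ j = 1
  | .inr (v, j), .inr (v', j') => v = v' ∧ (j' = j + 1 ∨ j = j' + 1)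

def R : SimpleGraph (CW q) where
  Adj a b := erel q a.1 b.1
  symm := by
    constructor
    rintro ⟨a, ha⟩ ⟨b, hb⟩ h
    rcases a with x | ⟨v, j⟩ <;> rcases b with y | ⟨w, jj⟩ <;>
      simp only [erel] at h ⊢
    · omega
    · exact h
    · exact h
    · exact ⟨h.1.symm, h.2.symm⟩
  loopless := by
    constructor
    rintro ⟨a, ha⟩ h
    rcases a with x | ⟨v, j⟩ <;> simp only [erel] at h <;> omega

noncomputable def phi (u : JVert q) : CV q → ℕ
  | .inl x => hf q u + nd x (pf q u)
  | .inr (v, j) => if v = u then hf q u - j else hf q u + nd (pf q v) (pf q u) + j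

def fmap (hq : 3 ≤ q) (v : JVert q) : CW q :=
  ⟨.inr (v, hf q v), ⟨hf_pos q hq v, le_rfl⟩⟩

lemma phi_zero (hq : 3 ≤ q) (u : JVert q) : phi q u (fmap q hq u).1 = 0 := by
  simp [phi, fmap]

def tgt : CV q → CV q
  | .inl x => if x = 0 then .inr (.t, 1) else .inl (x-1)
  | .inr (v, j) => if j = 1 then .inl (pf q v) else .inr (v, j-1)

lemma phi_desc (hq : 3 ≤ q) (u : JVert q) :
    ∀ w : CW q, w ≠ fmap q hq u →
      ∃ w' : CW q, (R q).Adj w w' ∧ phi q u w'.1 + 1 = phi q u w.1 := by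
  rintro ⟨w, hok⟩ hne
  have hple := pf_le q hq u
  have hhpos := hf_pos q hq u
  rcases w with x | ⟨v, j⟩
  · have hok' : x ≤ 2*q - 1 := hok
    rcases lt_trichotomy x (pf q u) with hx | hx | hx
    · refine ⟨⟨.inl (x+1), by show x+1 ≤ 2*q-1; omega⟩, Or.inl rfl, ?_⟩
      simp only [phi, nd]; omega
    · refine ⟨⟨.inr (u, 1), ⟨le_rfl, hhpos⟩⟩, ⟨hx, rfl⟩, ?_⟩
      simp only [phi, nd, eq_self_iff_true, if_true]; omega
    · refine ⟨⟨.inl (x-1), by show x-1 ≤ 2*q-1; omega⟩, by show _ ∨ _; omega, ?_⟩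
      simp only [phi, nd]; omega
  · obtain ⟨hj1, hj2⟩ := hok
    by_cases hvu : v = u
    · subst hvu
      have hjne : j ≠ hf q v := by
        intro h
        exact hne (Subtype.ext (by simp [fmap, h]))
      refine ⟨⟨.inr (v, j+1), ⟨by omega, by omega⟩⟩, ⟨rfl, Or.inl rfl⟩, ?_⟩
      simp only [phi, eq_self_iff_true, if_true]; omega
    · rcases eq_or_lt_of_le hj1 with hj | hj
      · refine ⟨⟨.inl (pf q v), pf_le q hq v⟩, ⟨rfl, hj.symm⟩, ?_⟩
        simp only [phi, if_neg hvu]; omega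
      · refine ⟨⟨.inr (v, j-1), ⟨by omega, by omega⟩⟩, ⟨rfl, by omega⟩, ?_⟩
        simp only [phi, if_neg hvu]; omega

lemma phi_lip (hq : 3 ≤ q) (u : JVert q) :
    ∀ a b : CW q, (R q).Adj a b → phi q u b.1 ≤ phi q u a.1 + 1 := by
  rintro ⟨a, ha⟩ ⟨b, hb⟩ hadj
  have hhpos := hf_pos q hq u
  rcases a with x | ⟨v, j⟩ <;> rcases b with y | ⟨w, jj⟩
  · have h : y = x + 1 ∨ x = y + 1 := hadj
    simp only [phi, nd]; omega
  · obtain ⟨h1, h2⟩ : x = pf q w ∧ jj = 1 := hadj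
    subst h1 h2
    by_cases h : w = u
    · subst h
      simp only [phi, nd, eq_self_iff_true, if_true]; omega
    · simp only [phi, nd, if_neg h]; omega
  · obtain ⟨h1, h2⟩ : y = pf q v ∧ j = 1 := hadj
    subst h1 h2
    by_cases h : v = u
    · subst h
      simp only [phi, nd, eq_self_iff_true, if_true]; omega
    · simp only [phi, nd, if_neg h]; omega
  · obtain ⟨h1, h2⟩ : v = w ∧ (jj = j + 1 ∨ j = jj + 1) := hadj
    subst h1
    obtain ⟨-, hj2⟩ := ha
    obtain ⟨hjj1, -⟩ := hb
    by_cases h : v = u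
    · subst h
      simp only [phi, eq_self_iff_true, if_true]; omega
    · simp only [phi, if_neg h]; omega

lemma dist_fmap (hq : 3 ≤ q) (u : JVert q) (w : CW q) :
    (R q).dist (fmap q hq u) w = phi q u w.1 :=
  dist_eq_of_potential (R q) (fmap q hq u) (fun w => phi q u w.1)
    (phi_zero q hq u) (phi_desc q hq u) (phi_lip q hq u) w

lemma dist_fmap_fmap (hq : 3 ≤ q) {u v : JVert q} (h : u ≠ v) :
    (R q).dist (fmap q hq u) (fmap q hq v) = hf q u + nd (pf q v) (pf q u) + hf q v := by
  rw [dist_fmap q hq u]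
  have hvu : v ≠ u := Ne.symm h
  simp only [fmap, phi, if_neg hvu]

lemma R_connected (hq : 3 ≤ q) : (R q).Connected := by
  rw [connected_iff]
  refine ⟨?_, ⟨fmap q hq .t⟩⟩
  intro a b
  have ha := (reachable_and_dist_le (R q) (fmap q hq .t) (fun w => phi q .t w.1)
    (phi_desc q hq .t) a).1
  have hb := (reachable_and_dist_le (R q) (fmap q hq .t) (fun w => phi q .t w.1)
    (phi_desc q hq .t) b).1
  exact ha.symm.trans hb

lemma pf_t : pf q .t = 0 := rfl
lemma hf_t : hf q .t = 1 := rfl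

lemma R_acyclic (hq : 3 ≤ q) : (R q).IsAcyclic := by
  apply isAcyclic_of_potential (R q) (fun w => phi q .t w.1)
  · -- step
    rintro ⟨a, ha⟩ ⟨b, hb⟩ hadj
    rcases a with x | ⟨v, j⟩ <;> rcases b with y | ⟨w, jj⟩ <;> try dsimp only
    · have h : y = x + 1 ∨ x = y + 1 := hadj
      simp only [phi, nd, pf_t, hf_t]; omega
    · obtain ⟨h1, h2⟩ : x = pf q w ∧ jj = 1 := hadj
      subst h1 h2
      by_cases h : w = JVert.t
      · subst h
        simp only [phi, nd, pf_t, hf_t, eq_self_iff_true, if_true]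
        first | omega | simp
      · simp only [phi, nd, pf_t, hf_t, if_neg h]
        first | omega | simp
    · obtain ⟨h1, h2⟩ : y = pf q v ∧ j = 1 := hadj
      subst h1 h2
      by_cases h : v = JVert.t
      · subst h
        simp only [phi, nd, pf_t, hf_t, eq_self_iff_true, if_true]
        first | omega | simp
      · simp only [phi, nd, pf_t, hf_t, if_neg h]
        first | omega | simp
    · obtain ⟨h1, h2⟩ : v = w ∧ (jj = j + 1 ∨ j = jj + 1) := hadj
      subst h1
      obtain ⟨hj1, hj2⟩ := ha
      obtain ⟨hjj1, hjj2⟩ := hb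
      by_cases h : v = JVert.t
      · subst h
        simp only [hf_t] at hj2 hjj2; omega
      · simp only [phi, if_neg h]
        first | omega | simp
  · -- uniqueness of descent
    rintro ⟨w, hw⟩ ⟨a, ha⟩ ⟨b, hb⟩ hwa hwb hpa hpb
    have key : ∀ c : CV q, ok q c → erel q w c →
        phi q .t c + 1 = phi q .t w → c = tgt q w := by
      rintro c hc hrel hphi
      rcases w with x | ⟨v, j⟩ <;> rcases c with y | ⟨v', j'⟩ <;> try dsimp only at hphi
      · have h : y = x + 1 ∨ x = y + 1 := hrel
        simp only [phi, nd, pf_t, hf_t] at hphi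
        have hx : ¬ (x = 0) := by omega
        simp only [tgt, if_neg hx]
        have : y = x - 1 := by omega
        rw [this]
      · obtain ⟨h1, h2⟩ : x = pf q v' ∧ j' = 1 := hrel
        subst h2
        by_cases h : v' = JVert.t
        · subst h
          simp only [pf_t] at h1
          subst h1
          simp [tgt]
        · exfalso
          simp only [phi, nd, pf_t, hf_t, if_neg h] at hphi
          omega
      · obtain ⟨h1, h2⟩ : y = pf q v ∧ j = 1 := hrel
        subst h1 h2
        simp [tgt]
      · obtain ⟨h1, h2⟩ : v = v' ∧ (j' = j + 1 ∨ j = j' + 1) := hrel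
        subst h1
        obtain ⟨hj1, hj2⟩ := hw
        obtain ⟨hj'1, hj'2⟩ := hc
        by_cases h : v = JVert.t
        · subst h
          simp only [hf_t] at hj2 hj'2; omega
        · simp only [phi, if_neg h] at hphi
          have hj : ¬ (j = 1) := by omega
          simp only [tgt, if_neg hj]
          have : j' = j - 1 := by omega
          rw [this]
    have hA := key a ha hwa hpa
    have hB := key b hb hwb hpb
    exact Subtype.ext (hA.trans hB.symm)

lemma finite_JVert : Finite (JVert q) := by
  apply Finite.of_injective (β := (Fin 4) ⊕ ((Fin q) ⊕ (Fin (q-1))))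
    (f := fun v => match v with
      | .t => .inl 0
      | .b => .inl 1
      | .z1 => .inl 2
      | .z2 => .inl 3
      | .x i => .inr (.inl i)
      | .y a => .inr (.inr a))
  intro a b h
  cases a <;> cases b <;> simp_all

lemma finite_CW (hq : 3 ≤ q) : Finite (CW q) := by
  have : Finite (JVert q) := finite_JVert q
  apply Finite.of_injective (β := (Fin (2*q)) ⊕ (JVert q × Fin (2*q+1)))
    (f := fun w => match w with
      | ⟨.inl x, h⟩ => .inl ⟨x, by
          have : x ≤ 2*q - 1 := h
          omega⟩
      | ⟨.inr (v, j), h⟩ => .inr (v, ⟨j, by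
          obtain ⟨h1, h2⟩ : 1 ≤ j ∧ j ≤ hf q v := h
          have := hf_le q hq v
          omega⟩))
  rintro ⟨a, ha⟩ ⟨b, hb⟩ h
  rcases a with x | ⟨v, j⟩ <;> rcases b with y | ⟨w, jj⟩ <;>
    simp_all [Subtype.ext_iff]

lemma CW_ne {a b : CV q} {ha : ok q a} {hb : ok q b} (h : a ≠ b) :
    (⟨a, ha⟩ : CW q) ≠ ⟨b, hb⟩ :=
  fun hh => h (congrArg Subtype.val hh)

lemma fmap_injective (hq : 3 ≤ q) : Function.Injective (fmap q hq) := by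
  intro a b h
  have h2 : (Sum.inr (a, hf q a) : CV q) = Sum.inr (b, hf q b) :=
    congrArg Subtype.val h
  exact congrArg Prod.fst (Sum.inr.inj h2)

lemma pf_b : pf q .b = 2*q - 1 := rfl
lemma hf_b : hf q .b = 2 := rfl

lemma leaf_iff (hq : 3 ≤ q) (w : CW q) :
    (∃ v, fmap q hq v = w) ↔ ∃! u, (R q).Adj w u := by
  constructor
  · rintro ⟨v, rfl⟩
    by_cases h1 : hf q v = 1
    · refine ⟨⟨.inl (pf q v), pf_le q hq v⟩, ⟨rfl, h1⟩, ?_⟩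
      rintro ⟨u, hu⟩ hadj
      rcases u with y | ⟨v', j'⟩
      · obtain ⟨e1, -⟩ : y = pf q v ∧ hf q v = 1 := hadj
        subst e1
        rfl
      · obtain ⟨e1, e2⟩ : v = v' ∧ (j' = hf q v + 1 ∨ hf q v = j' + 1) := hadj
        subst e1
        obtain ⟨f1, f2⟩ : 1 ≤ j' ∧ j' ≤ hf q v := hu
        omega
    · have hpos := hf_pos q hq v
      refine ⟨⟨.inr (v, hf q v - 1), ⟨by omega, by omega⟩⟩, ⟨rfl, Or.inr (by omega)⟩, ?_⟩
      rintro ⟨u, hu⟩ hadj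
      rcases u with y | ⟨v', j'⟩
      · obtain ⟨-, e2⟩ : y = pf q v ∧ hf q v = 1 := hadj
        exact absurd e2 h1
      · obtain ⟨e1, e2⟩ : v = v' ∧ (j' = hf q v + 1 ∨ hf q v = j' + 1) := hadj
        subst e1
        obtain ⟨f1, f2⟩ : 1 ≤ j' ∧ j' ≤ hf q v := hu
        have hj' : j' = hf q v - 1 := by omega
        subst hj'
        rfl
  · intro hEx
    by_contra hno
    push_neg at hno
    obtain ⟨c, hok⟩ := w
    have htwo : ∀ n1 n2 : CW q, (R q).Adj ⟨c, hok⟩ n1 → (R q).Adj ⟨c, hok⟩ n2 →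
        n1 ≠ n2 → False := by
      intro n1 n2 h1 h2 hne
      exact hne (hEx.unique h1 h2)
    rcases c with x | ⟨v, j⟩
    · have hx : x ≤ 2*q - 1 := hok
      by_cases h0 : x = 0
      · subst h0
        refine htwo ⟨.inl 1, by show (1:ℕ) ≤ 2*q-1; omega⟩
          ⟨.inr (.t, 1), ⟨le_rfl, le_rfl⟩⟩ (Or.inl rfl) ⟨rfl, rfl⟩ (CW_ne q (by simp))
      · by_cases hL : x = 2*q - 1
        · refine htwo ⟨.inl (x-1), by show x-1 ≤ 2*q-1; omega⟩
            ⟨.inr (.b, 1), ⟨le_rfl, by rw [hf_b]; omega⟩⟩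
            (by show _ ∨ _; omega) ⟨by rw [hL]; rfl, rfl⟩ (CW_ne q (by simp))
        · refine htwo ⟨.inl (x-1), by show x-1 ≤ 2*q-1; omega⟩
            ⟨.inl (x+1), by show x+1 ≤ 2*q-1; omega⟩
            (by show _ ∨ _; omega) (Or.inl rfl) (CW_ne q (by simp))
    · obtain ⟨hj1, hj2⟩ : 1 ≤ j ∧ j ≤ hf q v := hok
      have hjne : j ≠ hf q v := by
        intro h
        exact hno v (Subtype.ext (by simp [fmap, h]))
      by_cases hj : j = 1
      · refine htwo ⟨.inr (v, j+1), ⟨by omega, by omega⟩⟩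
          ⟨.inl (pf q v), pf_le q hq v⟩
          ⟨rfl, Or.inl rfl⟩ ⟨rfl, hj⟩ (CW_ne q (by simp))
      · refine htwo ⟨.inr (v, j+1), ⟨by omega, by omega⟩⟩
          ⟨.inr (v, j-1), ⟨by omega, by omega⟩⟩
          ⟨rfl, Or.inl rfl⟩ ⟨rfl, Or.inr (by omega)⟩ (CW_ne q (by simp; omega))

lemma adj_iff (hq : 3 ≤ q) (u v : JVert q) (hne : u ≠ v) :
    (evenGadget q).Adj u v ↔ hf q u + nd (pf q v) (pf q u) + hf q v ≤ 2*q := by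
  cases u <;> cases v <;>
    first
    | exact absurd rfl hne
    | (try simp only [ne_eq, JVert.x.injEq, JVert.y.injEq, Fin.ext_iff] at hne
       first
       | (rename_i i j
          have hi := i.isLt
          have hj := j.isLt
          simp only [evenGadget, SimpleGraph.fromRel_adj, pf, hf, nd, ne_eq,
            JVert.x.injEq, JVert.y.injEq, Fin.ext_iff, reduceCtorEq,
            not_false_eq_true, true_and, false_or, or_false, iff_true, iff_false, true_iff, false_iff, and_false, false_and, and_true,
            eq_self_iff_true, or_self, not_not]
          first | (split_ifs <;> omega) | omega)
       | (rename_i i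
          have hi := i.isLt
          simp only [evenGadget, SimpleGraph.fromRel_adj, pf, hf, nd, ne_eq,
            JVert.x.injEq, JVert.y.injEq, Fin.ext_iff, reduceCtorEq,
            not_false_eq_true, true_and, false_or, or_false, iff_true, iff_false, true_iff, false_iff, and_false, false_and, and_true,
            eq_self_iff_true, or_self, not_not]
          first | (split_ifs <;> omega) | omega)
       | (simp only [evenGadget, SimpleGraph.fromRel_adj, pf, hf, nd, ne_eq,
            reduceCtorEq, not_false_eq_true, true_and, false_or, or_false,
            iff_true, iff_false, true_iff, false_iff, and_false, false_and, and_true, eq_self_iff_true, or_self, not_not]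
          first | (split_ifs <;> omega) | omega))

lemma mval_t (hq : 3 ≤ q) : mval (R q) (fmap q hq) JVert.t = 2*q - 1 := by
  unfold mval
  have hmem : (2*q - 1) ∈ {d | ∃ u, u ≠ JVert.t ∧
      (R q).dist (fmap q hq u) (fmap q hq JVert.t) = d} := by
    refine ⟨.x ⟨0, by omega⟩, by simp, ?_⟩
    rw [dist_fmap_fmap q hq (by simp)]
    simp only [pf, hf, nd]
    first | omega | (split_ifs <;> omega)
  apply le_antisymm (Nat.sInf_le hmem)
  apply le_csInf ⟨_, hmem⟩
  rintro d ⟨u, hu, hd⟩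
  rw [dist_fmap_fmap q hq hu] at hd
  subst hd
  cases u <;>
    first
    | exact absurd rfl hu
    | (rename_i i
       have := i.isLt
       simp only [pf, hf, nd]
       first | omega | (split_ifs <;> omega))
    | (simp only [pf, hf, nd]
       first | omega | (split_ifs <;> omega))

lemma mval_b (hq : 3 ≤ q) : mval (R q) (fmap q hq) JVert.b = 4 := by
  unfold mval
  have hmem : (4:ℕ) ∈ {d | ∃ u, u ≠ JVert.b ∧
      (R q).dist (fmap q hq u) (fmap q hq JVert.b) = d} := by
    refine ⟨.x ⟨q-1, by omega⟩, by simp, ?_⟩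
    rw [dist_fmap_fmap q hq (by simp)]
    simp only [pf, hf, nd]
    first | omega | (split_ifs <;> omega)
  apply le_antisymm (Nat.sInf_le hmem)
  apply le_csInf ⟨_, hmem⟩
  rintro d ⟨u, hu, hd⟩
  rw [dist_fmap_fmap q hq hu] at hd
  subst hd
  cases u <;>
    first
    | exact absurd rfl hu
    | (rename_i i
       have := i.isLt
       simp only [pf, hf, nd]
       first | omega | (split_ifs <;> omega))
    | (simp only [pf, hf, nd]
       first | omega | (split_ifs <;> omega))

end EGR


theorem even_gadget_root_R (q : ℕ) (hq : 3 ≤ q) (k : ℕ) (hk : k = 2 * q) :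
    ∃ (W : Type) (R : SimpleGraph W) (f : JVert q → W),
      IsLeafRoot (evenGadget q) k R f ∧
      mval R f JVert.t = k - 1 ∧ mval R f JVert.b = 4 := by
  subst hk
  refine ⟨EGR.CW q, EGR.R q, EGR.fmap q hq,
    ⟨EGR.finite_CW q hq, ⟨EGR.R_connected q hq, EGR.R_acyclic q hq⟩,
      EGR.fmap_injective q hq, EGR.leaf_iff q hq, ?_⟩,
    EGR.mval_t q hq, EGR.mval_b q hq⟩
  intro u v huv
  rw [EGR.dist_fmap_fmap q hq huv]
  exact EGR.adj_iff q hq u v huv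
end
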